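/- Let A, E ∈ ℝ^{m×n} with m ≥ n, rank(A) = n, and ‖E‖ < σ_n(A) (spectral norm of E less than the smallest singular value of A). Then ‖(A+E)† − A†‖ ≤ √2 ‖E‖ / (σ_n(A)(σ_n(A) − ‖E‖)), where † denotes the Moore–Penrose pseudo-inverse. -/

import Mathlib

open Matrix
open scoped RealInnerProductSpace

section Helpers

variable {m n k : ℕ}

local notation "Ln" => Matrix.toEuclideanLin

lemma Ln_mul (M : Matrix (Fin m) (Fin n) ℝ) (N : Matrix (Fin n) (Fin k) ℝ)
    (x : EuclideanSpace ℝ (Fin k)) :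
    Ln (M * N) x = Ln M (Ln N x) := by
  simp [Matrix.toEuclideanLin_apply, Matrix.mulVec_mulVec]

lemma Ln_one (x : EuclideanSpace ℝ (Fin n)) :
    Ln (1 : Matrix (Fin n) (Fin n) ℝ) x = x := by
  simp [Matrix.toEuclideanLin_apply]

lemma inner_Ln (M : Matrix (Fin m) (Fin n) ℝ) (x : EuclideanSpace ℝ (Fin n))
    (y : EuclideanSpace ℝ (Fin m)) :
    ⟪Ln M x, y⟫ = ⟪x, Ln Mᵀ y⟫ := by
  have h := Matrix.toEuclideanLin_conjTranspose_eq_adjoint M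
  rw [Matrix.conjTranspose_eq_transpose_of_trivial] at h
  rw [h]
  exact (LinearMap.adjoint_inner_right (Ln M) x y).symm

end Helpers

/-- The spectral (ℓ²-operator) norm of a real matrix. -/
noncomputable def specNorm {m n : ℕ} (M : Matrix (Fin m) (Fin n) ℝ) : ℝ :=
  ‖LinearMap.toContinuousLinearMap (Matrix.toEuclideanLin M)‖

/-- The smallest singular value of a real matrix (the infimum of `‖Mx‖` over
unit vectors `x`). -/
noncomputable def sigmaMin {m n : ℕ} (M : Matrix (Fin m) (Fin n) ℝ) : ℝ :=
  sInf ((fun x : EuclideanSpace ℝ (Fin n) => ‖Matrix.toEuclideanLin M x‖) '' {x | ‖x‖ = 1})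

/-- The Moore–Penrose pseudo-inverse of a full column rank matrix. -/
noncomputable def pinv {m n : ℕ} (M : Matrix (Fin m) (Fin n) ℝ) :
    Matrix (Fin n) (Fin m) ℝ := (Mᵀ * M)⁻¹ * Mᵀ

section Helpers2

variable {m n : ℕ}

local notation "Ln" => Matrix.toEuclideanLin

lemma specNorm_nonneg (M : Matrix (Fin m) (Fin n) ℝ) : 0 ≤ specNorm M :=
  norm_nonneg _

lemma Ln_le_specNorm (M : Matrix (Fin m) (Fin n) ℝ) (x : EuclideanSpace ℝ (Fin n)) :
    ‖Ln M x‖ ≤ specNorm M * ‖x‖ := by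
  exact (LinearMap.toContinuousLinearMap (Ln M)).le_opNorm x

lemma specNorm_le (M : Matrix (Fin m) (Fin n) ℝ) (c : ℝ) (hc : 0 ≤ c)
    (h : ∀ x, ‖Ln M x‖ ≤ c * ‖x‖) : specNorm M ≤ c := by
  apply ContinuousLinearMap.opNorm_le_bound _ hc
  intro x
  simpa using h x

/-- norm bound transfers to the transpose. -/
lemma transpose_bound (M : Matrix (Fin m) (Fin n) ℝ) (c : ℝ) (hc : 0 ≤ c)
    (h : ∀ x, ‖Ln M x‖ ≤ c * ‖x‖) :
    ∀ y : EuclideanSpace ℝ (Fin m), ‖Ln Mᵀ y‖ ≤ c * ‖y‖ := by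
  intro y
  set u : EuclideanSpace ℝ (Fin n) := Ln Mᵀ y with hu
  have h1 : ‖u‖ ^ 2 = ⟪Ln Mᵀ y, u⟫ := by
    rw [← hu, real_inner_self_eq_norm_sq]
  have h2 : ⟪Ln Mᵀ y, u⟫ = ⟪y, Ln M u⟫ := by
    rw [inner_Ln, Matrix.transpose_transpose]
  have h3 : ⟪y, Ln M u⟫ ≤ ‖y‖ * (c * ‖u‖) :=
    le_trans (real_inner_le_norm y (Ln M u))
      (by
        have := h u
        nlinarith [norm_nonneg y, norm_nonneg (Ln M u)])
  have h4 : ‖u‖ ^ 2 ≤ ‖y‖ * (c * ‖u‖) := by rw [h1, h2]; exact h3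
  rcases (norm_nonneg u).eq_or_lt with h0 | h0
  · rw [← h0]; positivity
  · nlinarith

lemma sigmaMin_mul_norm_le (M : Matrix (Fin m) (Fin n) ℝ) (hσ : 0 ≤ sigmaMin M)
    (x : EuclideanSpace ℝ (Fin n)) : sigmaMin M * ‖x‖ ≤ ‖Ln M x‖ := by
  rcases eq_or_ne x 0 with rfl | hx
  · simp
  · have hxn : ‖x‖ ≠ 0 := norm_ne_zero_iff.mpr hx
    set u : EuclideanSpace ℝ (Fin n) := ‖x‖⁻¹ • x with hu
    have hun : ‖u‖ = 1 := norm_smul_inv_norm hx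
    have hmem : ‖Ln M u‖ ∈
        ((fun x : EuclideanSpace ℝ (Fin n) => ‖Matrix.toEuclideanLin M x‖) '' {x | ‖x‖ = 1}) :=
      ⟨u, hun, rfl⟩
    have hbdd : BddBelow
        ((fun x : EuclideanSpace ℝ (Fin n) => ‖Matrix.toEuclideanLin M x‖) '' {x | ‖x‖ = 1}) :=
      ⟨0, fun a ⟨v, _, hv⟩ => hv ▸ norm_nonneg _⟩
    have hle : sigmaMin M ≤ ‖Ln M u‖ := csInf_le hbdd hmem
    have : ‖Ln M u‖ = ‖x‖⁻¹ * ‖Ln M x‖ := by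
      rw [hu, _root_.map_smul, norm_smul, norm_inv, norm_norm]
    rw [this] at hle
    have hxpos : 0 < ‖x‖ := (norm_nonneg x).lt_of_ne (Ne.symm hxn)
    calc sigmaMin M * ‖x‖ ≤ (‖x‖⁻¹ * ‖Ln M x‖) * ‖x‖ := by
          exact mul_le_mul_of_nonneg_right hle (le_of_lt hxpos)
      _ = ‖Ln M x‖ := by field_simp

lemma det_isUnit_of_lower (M : Matrix (Fin m) (Fin n) ℝ) (c : ℝ) (hc : 0 < c)
    (h : ∀ x, c * ‖x‖ ≤ ‖Ln M x‖) : IsUnit (Mᵀ * M).det := by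
  by_contra hdet
  have h0 : (Mᵀ * M).det = 0 := by
    rcases eq_or_ne ((Mᵀ * M).det) 0 with h' | h'
    · exact h'
    · exact absurd (isUnit_iff_ne_zero.mpr h') hdet
  obtain ⟨v, hv, hMv⟩ := (Matrix.exists_mulVec_eq_zero_iff).mpr h0
  set x : EuclideanSpace ℝ (Fin n) := (WithLp.equiv 2 (Fin n → ℝ)).symm v with hx
  have hx0 : x ≠ 0 := by
    simp only [hx, ne_eq]
    intro hc'
    exact hv (by simpa using congrArg (WithLp.equiv 2 (Fin n → ℝ)) hc')
  have hLn0 : Ln (Mᵀ * M) x = 0 := by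
    rw [hx, WithLp.equiv_symm_apply, Matrix.toEuclideanLin_apply_piLp_toLp, hMv]
    simp
  have hinner : ‖Ln M x‖ ^ 2 = 0 := by
    have : (0 : ℝ) = ⟪x, Ln (Mᵀ * M) x⟫ := by rw [hLn0]; simp
    rw [this, Ln_mul, ← inner_Ln, real_inner_self_eq_norm_sq]
  have hxpos : 0 < ‖x‖ := norm_pos_iff.mpr hx0
  have h9 : ‖Ln M x‖ = 0 := by
    have h' : ‖Ln M x‖ * ‖Ln M x‖ = 0 := by nlinarith
    exact mul_self_eq_zero.mp h'
  have := h x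
  nlinarith

lemma pinv_bound (M : Matrix (Fin m) (Fin n) ℝ) (c : ℝ) (hc : 0 < c)
    (h : ∀ x, c * ‖x‖ ≤ ‖Ln M x‖) :
    ∀ y : EuclideanSpace ℝ (Fin m), ‖Ln (pinv M) y‖ ≤ c⁻¹ * ‖y‖ := by
  intro y
  have hdet := det_isUnit_of_lower M c hc h
  set z : EuclideanSpace ℝ (Fin n) := Ln (pinv M) y with hz
  -- matrix identity : Mᵀ * (M * pinv M) = Mᵀ
  have hmat : (Mᵀ * M) * pinv M = Mᵀ := by
    rw [pinv, ← Matrix.mul_assoc, Matrix.mul_nonsing_inv _ hdet, Matrix.one_mul]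
  have hkey : Ln Mᵀ (Ln M z - y) = 0 := by
    have h1 : Ln Mᵀ (Ln M z) = Ln Mᵀ y := by
      rw [hz, ← Ln_mul, ← Ln_mul, hmat]
    rw [map_sub, h1, sub_self]
  have h2 : ‖Ln M z‖ ^ 2 = ⟪Ln M z, y⟫ + ⟪Ln M z, Ln M z - y⟫ := by
    rw [← inner_add_right, add_sub_cancel]
    exact (real_inner_self_eq_norm_sq _).symm
  have h3 : ⟪Ln M z, Ln M z - y⟫ = 0 := by rw [inner_Ln, hkey, inner_zero_right]
  have h4 : ‖Ln M z‖ ^ 2 ≤ ‖Ln M z‖ * ‖y‖ := by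
    rw [h2, h3, add_zero]; exact real_inner_le_norm _ _
  have h5 : ‖Ln M z‖ ≤ ‖y‖ := by
    rcases (norm_nonneg (Ln M z)).eq_or_lt with h0 | h0
    · rw [← h0]; exact norm_nonneg y
    · nlinarith
  have h6 : c * ‖z‖ ≤ ‖y‖ := le_trans (h z) h5
  have heq : ‖z‖ = c⁻¹ * (c * ‖z‖) := by field_simp
  rw [heq]
  exact mul_le_mul_of_nonneg_left h6 (by positivity)

end Helpers2

section Main

variable {m n : ℕ}

local notation "Ln" => Matrix.toEuclideanLin

lemma Ln_add (X Y : Matrix (Fin m) (Fin n) ℝ) (x : EuclideanSpace ℝ (Fin n)) :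
    Ln (X + Y) x = Ln X x + Ln Y x := by rw [map_add]; rfl

lemma Ln_sub (X Y : Matrix (Fin m) (Fin n) ℝ) (x : EuclideanSpace ℝ (Fin n)) :
    Ln (X - Y) x = Ln X x - Ln Y x := by rw [map_sub]; rfl

lemma Ln_neg (X : Matrix (Fin m) (Fin n) ℝ) (x : EuclideanSpace ℝ (Fin n)) :
    Ln (-X) x = -(Ln X x) := by rw [map_neg]; rfl

set_option maxHeartbeats 1600000 in
theorem pinv_perturbation' (m n : ℕ) (A E : Matrix (Fin m) (Fin n) ℝ)
    (hE : specNorm E < sigmaMin A) :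
    specNorm (pinv (A + E) - pinv A)
      ≤ Real.sqrt 2 * specNorm E / (sigmaMin A * (sigmaMin A - specNorm E)) := by
  set B := A + E with hB
  set σ := sigmaMin A with hσdef
  set ε := specNorm E with hεdef
  have hε0 : 0 ≤ ε := specNorm_nonneg E
  have hσpos : 0 < σ := lt_of_le_of_lt hε0 hE
  have hσεpos : 0 < σ - ε := sub_pos.mpr hE
  -- lower bounds
  have hAlow : ∀ x, σ * ‖x‖ ≤ ‖Ln A x‖ := sigmaMin_mul_norm_le A (le_of_lt hσpos)
  have hElow : ∀ x, ‖Ln E x‖ ≤ ε * ‖x‖ := Ln_le_specNorm E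
  have hBlow : ∀ x, (σ - ε) * ‖x‖ ≤ ‖Ln B x‖ := by
    intro x
    have h1 : Ln A x = Ln B x - Ln E x := by
      rw [hB, Ln_add]; abel
    have h2 : ‖Ln A x‖ ≤ ‖Ln B x‖ + ‖Ln E x‖ := by
      rw [h1]; exact norm_sub_le _ _
    have := hAlow x
    have := hElow x
    nlinarith
  -- determinants
  have hdetA : IsUnit (Aᵀ * A).det := det_isUnit_of_lower A σ hσpos hAlow
  have hdetB : IsUnit (Bᵀ * B).det := det_isUnit_of_lower B (σ - ε) hσεpos hBlow
  -- pinv identities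
  have hpA : pinv A * A = 1 := by
    rw [pinv, Matrix.mul_assoc, Matrix.nonsing_inv_mul _ hdetA]
  have hpB : pinv B * B = 1 := by
    rw [pinv, Matrix.mul_assoc, Matrix.nonsing_inv_mul _ hdetB]
  -- pinv bounds
  have hpAbd : ∀ y, ‖Ln (pinv A) y‖ ≤ σ⁻¹ * ‖y‖ := pinv_bound A σ hσpos hAlow
  have hpBbd : ∀ y, ‖Ln (pinv B) y‖ ≤ (σ - ε)⁻¹ * ‖y‖ := pinv_bound B (σ - ε) hσεpos hBlow
  have hpAtbd : ∀ y, ‖Ln (pinv A)ᵀ y‖ ≤ σ⁻¹ * ‖y‖ :=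
    transpose_bound (pinv A) σ⁻¹ (inv_nonneg.mpr hσpos.le) hpAbd
  have hEtbd : ∀ y, ‖Ln Eᵀ y‖ ≤ ε * ‖y‖ := transpose_bound E ε hε0 hElow
  -- matrix algebra
  have hmatB : (Bᵀ * B) * pinv B = Bᵀ := by
    rw [pinv, ← Matrix.mul_assoc, Matrix.mul_nonsing_inv _ hdetB, Matrix.one_mul]
  have h3 : Bᵀ * (1 - B * pinv B) = 0 := by
    rw [Matrix.mul_sub, Matrix.mul_one, ← Matrix.mul_assoc, hmatB, sub_self]
  have hAt : Aᵀ = Bᵀ - Eᵀ := by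
    rw [hB, Matrix.transpose_add, add_sub_cancel_right]
  have h4 : pinv A * (1 - B * pinv B) = -((Aᵀ * A)⁻¹ * (Eᵀ * (1 - B * pinv B))) := by
    calc pinv A * (1 - B * pinv B)
        = (Aᵀ * A)⁻¹ * (Aᵀ * (1 - B * pinv B)) := by rw [pinv, Matrix.mul_assoc]
      _ = (Aᵀ * A)⁻¹ * ((Bᵀ - Eᵀ) * (1 - B * pinv B)) := by rw [← hAt]
      _ = (Aᵀ * A)⁻¹ * (Bᵀ * (1 - B * pinv B) - Eᵀ * (1 - B * pinv B)) := by
          rw [Matrix.sub_mul]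
      _ = -((Aᵀ * A)⁻¹ * (Eᵀ * (1 - B * pinv B))) := by
          rw [h3, zero_sub, Matrix.mul_neg]
  have hAeq : A = B - E := by rw [hB, add_sub_cancel_right]
  have hid : pinv B - pinv A
      = -(pinv A * (E * pinv B)) + (Aᵀ * A)⁻¹ * (Eᵀ * (1 - B * pinv B)) := by
    have step1 : pinv B - pinv A
        = (pinv A * (B * pinv B) - pinv A * (E * pinv B)) - pinv A := by
      calc pinv B - pinv A = (pinv A * A) * pinv B - pinv A := by
            rw [hpA, Matrix.one_mul]
        _ = (pinv A * (B - E)) * pinv B - pinv A := by rw [← hAeq]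
        _ = (pinv A * (B * pinv B) - pinv A * (E * pinv B)) - pinv A := by
            rw [Matrix.mul_sub, Matrix.sub_mul, Matrix.mul_assoc, Matrix.mul_assoc]
    have step2 : pinv A * (1 - B * pinv B) = pinv A - pinv A * (B * pinv B) := by
      rw [Matrix.mul_sub, Matrix.mul_one]
    have h4' : (Aᵀ * A)⁻¹ * (Eᵀ * (1 - B * pinv B)) = -(pinv A * (1 - B * pinv B)) := by
      rw [h4, neg_neg]
    rw [step1, h4', step2]
    abel
  -- the projector
  have hresB : pinv B * (B * pinv B) = pinv B := by
    rw [← Matrix.mul_assoc, hpB, Matrix.one_mul]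
  have hPt : (B * pinv B)ᵀ = B * pinv B := by
    have h1 : (pinv B)ᵀ = B * (Bᵀ * B)⁻¹ := by
      rw [pinv, Matrix.transpose_mul, Matrix.transpose_transpose,
        Matrix.transpose_nonsing_inv, Matrix.transpose_mul, Matrix.transpose_transpose]
    rw [Matrix.transpose_mul, h1, pinv, Matrix.mul_assoc]
  have hPP : (B * pinv B) * (B * pinv B) = B * pinv B := by
    rw [Matrix.mul_assoc, hresB]
  have hPyth : ∀ x : EuclideanSpace ℝ (Fin m),
      ‖Ln (B * pinv B) x‖ ^ 2 + ‖x - Ln (B * pinv B) x‖ ^ 2 = ‖x‖ ^ 2 := by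
    intro x
    have hsplit : x = Ln (B * pinv B) x + (x - Ln (B * pinv B) x) := by abel
    have hinner : ⟪Ln (B * pinv B) x, x - Ln (B * pinv B) x⟫ = 0 := by
      rw [inner_Ln, hPt]
      have : Ln (B * pinv B) (x - Ln (B * pinv B) x) = 0 := by
        rw [map_sub, ← Ln_mul, hPP, sub_self]
      rw [this, inner_zero_right]
    calc ‖Ln (B * pinv B) x‖ ^ 2 + ‖x - Ln (B * pinv B) x‖ ^ 2
        = ‖Ln (B * pinv B) x‖ ^ 2 + 2 * ⟪Ln (B * pinv B) x, x - Ln (B * pinv B) x⟫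
            + ‖x - Ln (B * pinv B) x‖ ^ 2 := by rw [hinner]; ring
      _ = ‖Ln (B * pinv B) x + (x - Ln (B * pinv B) x)‖ ^ 2 := (norm_add_sq_real _ _).symm
      _ = ‖x‖ ^ 2 := by rw [← hsplit]
  -- (AᵀA)⁻¹ = pinv A * (pinv A)ᵀ
  have hiA : (Aᵀ * A)⁻¹ = pinv A * (pinv A)ᵀ := by
    have h1 : (pinv A)ᵀ = A * (Aᵀ * A)⁻¹ := by
      rw [pinv, Matrix.transpose_mul, Matrix.transpose_transpose,
        Matrix.transpose_nonsing_inv, Matrix.transpose_mul, Matrix.transpose_transpose]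
    rw [h1, pinv, Matrix.mul_assoc, ← Matrix.mul_assoc Aᵀ A,
      Matrix.mul_nonsing_inv _ hdetA, Matrix.mul_one]
  -- main pointwise bound
  set c₁ : ℝ := σ⁻¹ * (ε * (σ - ε)⁻¹) with hc₁
  set c₂ : ℝ := σ⁻¹ * (σ⁻¹ * ε) with hc₂
  have hc₁0 : 0 ≤ c₁ := mul_nonneg (inv_nonneg.mpr hσpos.le)
    (mul_nonneg hε0 (inv_nonneg.mpr hσεpos.le))
  have hc₂0 : 0 ≤ c₂ := mul_nonneg (inv_nonneg.mpr hσpos.le)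
    (mul_nonneg (inv_nonneg.mpr hσpos.le) hε0)
  have hc21 : c₂ ≤ c₁ := by
    rw [hc₁, hc₂]
    have h1 : σ⁻¹ * ε ≤ ε * (σ - ε)⁻¹ := by
      rw [mul_comm σ⁻¹ ε]
      apply mul_le_mul_of_nonneg_left _ hε0
      exact inv_anti₀ hσεpos (by linarith)
    exact mul_le_mul_of_nonneg_left h1 (inv_nonneg.mpr hσpos.le)
  have hmain : ∀ x : EuclideanSpace ℝ (Fin m),
      ‖Ln (pinv B - pinv A) x‖
        ≤ Real.sqrt 2 * ε / (σ * (σ - ε)) * ‖x‖ := by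
    intro x
    set Px : EuclideanSpace ℝ (Fin m) := Ln (B * pinv B) x with hPx
    set w : EuclideanSpace ℝ (Fin m) := x - Px with hw
    -- decomposition
    have hdecomp : Ln (pinv B - pinv A) x
        = -(Ln (pinv A) (Ln E (Ln (pinv B) Px)))
          + Ln (pinv A) (Ln (pinv A)ᵀ (Ln Eᵀ w)) := by
      have hterm1 : Ln (pinv A * (E * pinv B)) x = Ln (pinv A) (Ln E (Ln (pinv B) Px)) := by
        rw [Ln_mul, Ln_mul]
        conv_rhs => rw [hPx, ← Ln_mul (pinv B) (B * pinv B), hresB]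
      have hterm2 : Ln ((Aᵀ * A)⁻¹ * (Eᵀ * (1 - B * pinv B))) x
          = Ln (pinv A) (Ln (pinv A)ᵀ (Ln Eᵀ w)) := by
        rw [hiA, Ln_mul, Ln_mul, Ln_mul, Ln_sub, Ln_one, ← hPx, ← hw]
      rw [hid, Ln_add, Ln_neg, hterm1, hterm2]
    have ht1 : ‖Ln (pinv A) (Ln E (Ln (pinv B) Px))‖ ≤ c₁ * ‖Px‖ := by
      calc ‖Ln (pinv A) (Ln E (Ln (pinv B) Px))‖
          ≤ σ⁻¹ * ‖Ln E (Ln (pinv B) Px)‖ := hpAbd _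
        _ ≤ σ⁻¹ * (ε * ‖Ln (pinv B) Px‖) := by
            apply mul_le_mul_of_nonneg_left (hElow _) (inv_nonneg.mpr hσpos.le)
        _ ≤ σ⁻¹ * (ε * ((σ - ε)⁻¹ * ‖Px‖)) := by
            apply mul_le_mul_of_nonneg_left _ (inv_nonneg.mpr hσpos.le)
            exact mul_le_mul_of_nonneg_left (hpBbd _) hε0
        _ = c₁ * ‖Px‖ := by rw [hc₁]; ring
    have ht2 : ‖Ln (pinv A) (Ln (pinv A)ᵀ (Ln Eᵀ w))‖ ≤ c₂ * ‖w‖ := by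
      calc ‖Ln (pinv A) (Ln (pinv A)ᵀ (Ln Eᵀ w))‖
          ≤ σ⁻¹ * ‖Ln (pinv A)ᵀ (Ln Eᵀ w)‖ := hpAbd _
        _ ≤ σ⁻¹ * (σ⁻¹ * ‖Ln Eᵀ w‖) := by
            apply mul_le_mul_of_nonneg_left (hpAtbd _) (inv_nonneg.mpr hσpos.le)
        _ ≤ σ⁻¹ * (σ⁻¹ * (ε * ‖w‖)) := by
            apply mul_le_mul_of_nonneg_left _ (inv_nonneg.mpr hσpos.le)
            exact mul_le_mul_of_nonneg_left (hEtbd _) (inv_nonneg.mpr hσpos.le)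
        _ = c₂ * ‖w‖ := by rw [hc₂]; ring
    have htri : ‖Ln (pinv B - pinv A) x‖ ≤ c₁ * ‖Px‖ + c₂ * ‖w‖ := by
      rw [hdecomp]
      calc ‖-(Ln (pinv A) (Ln E (Ln (pinv B) Px)))
            + Ln (pinv A) (Ln (pinv A)ᵀ (Ln Eᵀ w))‖
          ≤ ‖-(Ln (pinv A) (Ln E (Ln (pinv B) Px)))‖
            + ‖Ln (pinv A) (Ln (pinv A)ᵀ (Ln Eᵀ w))‖ := norm_add_le _ _
        _ ≤ c₁ * ‖Px‖ + c₂ * ‖w‖ := by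
            rw [norm_neg]; exact add_le_add ht1 ht2
    -- the sqrt 2 step
    have hab : ‖Px‖ ^ 2 + ‖w‖ ^ 2 = ‖x‖ ^ 2 := hPyth x
    set a := ‖Px‖
    set b := ‖w‖
    have ha0 : 0 ≤ a := norm_nonneg _
    have hb0 : 0 ≤ b := norm_nonneg _
    have hx0 : 0 ≤ ‖x‖ := norm_nonneg _
    have hsq : (c₁ * a + c₂ * b) ^ 2 ≤ (Real.sqrt 2 * c₁ * ‖x‖) ^ 2 := by
      have h2 : (Real.sqrt 2) ^ 2 = 2 := Real.sq_sqrt (by norm_num)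
      have key : (c₁ * a + c₂ * b) ^ 2 ≤ 2 * c₁ ^ 2 * (a ^ 2 + b ^ 2) := by
        nlinarith [sq_nonneg (c₁ * a - c₂ * b), sq_nonneg (c₁ * b - c₂ * a),
          mul_nonneg (mul_nonneg (sub_nonneg.mpr hc21) (add_nonneg hc₂0 hc₁0)) (sq_nonneg b)]
      calc (c₁ * a + c₂ * b) ^ 2 ≤ 2 * c₁ ^ 2 * (a ^ 2 + b ^ 2) := key
        _ = 2 * c₁ ^ 2 * ‖x‖ ^ 2 := by rw [hab]
        _ = (Real.sqrt 2 * c₁ * ‖x‖) ^ 2 := by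
            have hexp : (Real.sqrt 2 * c₁ * ‖x‖) ^ 2 = 2 * c₁ ^ 2 * ‖x‖ ^ 2 := by
              rw [mul_pow, mul_pow, h2]
            rw [hexp]
    have hfin : c₁ * a + c₂ * b ≤ Real.sqrt 2 * c₁ * ‖x‖ := by
      have h1 : c₁ * a + c₂ * b = Real.sqrt ((c₁ * a + c₂ * b) ^ 2) := by
        rw [Real.sqrt_sq (add_nonneg (mul_nonneg hc₁0 ha0) (mul_nonneg hc₂0 hb0))]
      have h2 : Real.sqrt 2 * c₁ * ‖x‖ = Real.sqrt ((Real.sqrt 2 * c₁ * ‖x‖) ^ 2) := by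
        rw [Real.sqrt_sq (mul_nonneg (mul_nonneg (Real.sqrt_nonneg 2) hc₁0) hx0)]
      rw [h1, h2]
      exact Real.sqrt_le_sqrt hsq
    have hKeq : Real.sqrt 2 * c₁ = Real.sqrt 2 * ε / (σ * (σ - ε)) := by
      rw [hc₁]; field_simp
    calc ‖Ln (pinv B - pinv A) x‖ ≤ c₁ * a + c₂ * b := htri
      _ ≤ Real.sqrt 2 * c₁ * ‖x‖ := hfin
      _ = Real.sqrt 2 * ε / (σ * (σ - ε)) * ‖x‖ := by rw [hKeq]
  exact specNorm_le _ _ (div_nonneg (mul_nonneg (Real.sqrt_nonneg 2) hε0)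
    (mul_pos hσpos hσεpos).le) hmain

end Main

theorem pinv_perturbation (m n : ℕ) (hmn : n ≤ m) (A E : Matrix (Fin m) (Fin n) ℝ)
    (hA : A.rank = n) (hE : specNorm E < sigmaMin A) :
    specNorm (pinv (A + E) - pinv A)
      ≤ Real.sqrt 2 * specNorm E / (sigmaMin A * (sigmaMin A - specNorm E)) :=
  pinv_perturbation' m n A E hE
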